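/- arXiv:2005.02857 — 3 statements merged into one kernel-verified Lean document; each statement's English description precedes it below -/
import Mathlib

section
/- Let ε ∈ (0,1/4), δ_ε = |ln ε|^{-1/4}, and η_ε as in the definition of the logarithmic cutoff profile (with δ_ε replaced by 1 by scaling, i.e., η_ε(t) = -(1/|ln ε|)·ln √((t-ε)² + ε²) for t ∈ (ε, ε+√(1-ε²)), η_ε = 1 on [0,ε], η_ε = 0 beyond). Then there is a universal constant C > 0 such that π·∫_0^1 t·|η_ε'(t)|² dt ≤ π/|ln ε| + C/|ln ε|^{3/2}. -/
set_option maxHeartbeats 800000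

open Real intervalIntegral MeasureTheory Set

lemma hasDerivAt_G (ε : ℝ) (hε : 0 < ε) (t : ℝ) :
    HasDerivAt (fun t => Real.log ((t-ε)^2+ε^2)/2 + ε^2/(2*((t-ε)^2+ε^2))
      + Real.arctan ((t-ε)/ε)/2 - ε*(t-ε)/(2*((t-ε)^2+ε^2)))
      (t * (t-ε)^2 / ((t-ε)^2+ε^2)^2) t := by
  have hDpos : 0 < (t-ε)^2+ε^2 := by positivity
  have hD : HasDerivAt (fun t => (t-ε)^2+ε^2) (2*(t-ε)) t := by
    have h1 : HasDerivAt (fun t : ℝ => (t-ε)^2) (2*(t-ε)^1*1) t :=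
      (((hasDerivAt_id t).sub_const ε).pow 2)
    simpa using h1.add_const (ε^2)
  have h1 : HasDerivAt (fun t => Real.log ((t-ε)^2+ε^2)/2) ((2*(t-ε))/((t-ε)^2+ε^2)/2) t :=
    (hD.log hDpos.ne').div_const 2
  have h2 : HasDerivAt (fun t => ε^2/(2*((t-ε)^2+ε^2)))
      ((0*(2*((t-ε)^2+ε^2)) - ε^2*(2*(2*(t-ε))))/(2*((t-ε)^2+ε^2))^2) t :=
    (hasDerivAt_const t (ε^2)).div (hD.const_mul 2) (by positivity)
  have h3i : HasDerivAt (fun t : ℝ => (t-ε)/ε) (1/ε) t := by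
    simpa using ((hasDerivAt_id t).sub_const ε).div_const ε
  have h3 : HasDerivAt (fun t => Real.arctan ((t-ε)/ε)/2)
      ((1/(1+((t-ε)/ε)^2)*(1/ε))/2) t :=
    by have h3c := (Real.hasDerivAt_arctan ((t-ε)/ε)).comp t h3i; exact h3c.div_const 2
  have h4i : HasDerivAt (fun t : ℝ => ε*(t-ε)) (ε*1) t :=
    ((hasDerivAt_id t).sub_const ε).const_mul ε
  have h4 : HasDerivAt (fun t => ε*(t-ε)/(2*((t-ε)^2+ε^2)))
      ((ε*1*(2*((t-ε)^2+ε^2)) - ε*(t-ε)*(2*(2*(t-ε))))/(2*((t-ε)^2+ε^2))^2) t :=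
    h4i.div (hD.const_mul 2) (by positivity)
  have := ((h1.add h2).add h3).sub h4
  refine this.congr_deriv ?_
  have h1ε : (1:ℝ)+((t-ε)/ε)^2 = ((t-ε)^2+ε^2)/ε^2 := by field_simp; ring
  rw [h1ε]
  field_simp
  ring

/-- Sharp estimate of the weighted Dirichlet-type integral of the derivative of
the (scaled) logarithmic cutoff profile:
`π ∫_0^1 t |η_ε'(t)|² dt ≤ π/|ln ε| + C/|ln ε|^{3/2}` for a universal `C`. -/
theorem stmt6 : ∃ C : ℝ, 0 < C ∧ ∀ ε : ℝ, ε ∈ Set.Ioo 0 (1 / 4 : ℝ) →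
    Real.pi * ∫ t in (0 : ℝ)..1,
        t * ((if ε < t ∧ t < ε + Real.sqrt (1 - ε ^ 2) then
              -(1 / |Real.log ε|) * ((t - ε) / ((t - ε) ^ 2 + ε ^ 2))
            else 0)) ^ 2
      ≤ Real.pi / |Real.log ε| + C / |Real.log ε| ^ ((3 : ℝ) / 2) := by
  refine ⟨2 * Real.pi, by positivity, fun ε ⟨hε0, hε4⟩ => ?_⟩
  have hε1 : ε < 1 := by linarith
  set L := |Real.log ε| with hLdef
  have hlog : Real.log ε < 0 := Real.log_neg hε0 (by linarith)
  have hL : L = -Real.log ε := abs_of_neg hlog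
  have hL1 : 1 < L := by
    have h4 : (1:ℝ) < Real.log 4 := by
      rw [Real.lt_log_iff_exp_lt (by norm_num)]
      have := Real.exp_one_lt_d9
      linarith
    have : Real.log ε < Real.log (1/4) := Real.log_lt_log hε0 hε4
    rw [hL]
    rw [show (1/4:ℝ) = 4⁻¹ by norm_num, Real.log_inv] at this
    linarith
  have hLpos : 0 < L := by linarith
  set g : ℝ → ℝ := fun t => t * (t-ε)^2 / ((t-ε)^2+ε^2)^2 with hg
  set F : ℝ → ℝ := fun t =>
      t * ((if ε < t ∧ t < ε + Real.sqrt (1 - ε ^ 2) then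
            -(1 / |Real.log ε|) * ((t - ε) / ((t - ε) ^ 2 + ε ^ 2))
          else 0)) ^ 2 with hF
  have C_g : Continuous g := by
    apply Continuous.div (by continuity) (by continuity)
    intro x
    positivity
  have key1 : 1 < ε + Real.sqrt (1-ε^2) := by
    have : 1 - ε < Real.sqrt (1-ε^2) := (Real.lt_sqrt (by linarith)).mpr (by nlinarith)
    linarith
  have hEq1 : EqOn F (fun t => (1/L^2) * g t) (uIcc ε 1) := by
    intro t ht
    rw [uIcc_of_le hε1.le] at ht
    obtain ⟨ht1, ht2⟩ := ht
    by_cases h : ε < t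
    · have hDne : ((t-ε)^2+ε^2) ≠ 0 := by positivity
      have hLne : |Real.log ε| ≠ 0 := by rw [← hLdef]; exact hLpos.ne'
      rw [hF, hg]
      simp only
      rw [if_pos ⟨h, lt_of_le_of_lt ht2 key1⟩]
      rw [← hLdef]
      field_simp
    · have : t = ε := le_antisymm (not_lt.mp h) ht1
      subst this
      rw [hF, hg]
      simp
  have hEq0 : EqOn F (fun _ => (0:ℝ)) (uIcc 0 ε) := by
    intro t ht
    rw [uIcc_of_le hε0.le] at ht
    have : ¬ (ε < t) := not_lt.mpr ht.2
    rw [hF]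
    simp [this]
  have int1 : IntervalIntegrable F volume ε 1 := by
    refine ((C_g.intervalIntegrable ε 1).const_mul (1/L^2)).congr ?_
    exact fun x hx => (hEq1 (uIoc_subset_uIcc hx)).symm
  have int0 : IntervalIntegrable F volume 0 ε := by
    refine (_root_.intervalIntegrable_const (c := (0:ℝ))).congr ?_
    exact fun x hx => (hEq0 (uIoc_subset_uIcc hx)).symm
  have hsplit : (∫ t in (0:ℝ)..1, F t) = (∫ t in (0:ℝ)..ε, F t) + ∫ t in ε..1, F t :=
    (integral_add_adjacent_intervals int0 int1).symm
  have hI0 : (∫ t in (0:ℝ)..ε, F t) = 0 := by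
    rw [integral_congr hEq0]; simp
  set G : ℝ → ℝ := fun t => Real.log ((t-ε)^2+ε^2)/2 + ε^2/(2*((t-ε)^2+ε^2))
      + Real.arctan ((t-ε)/ε)/2 - ε*(t-ε)/(2*((t-ε)^2+ε^2)) with hGdef
  have hgint : (∫ t in ε..1, g t) = G 1 - G ε :=
    integral_eq_sub_of_hasDerivAt (fun t _ => hasDerivAt_G ε hε0 t)
      (C_g.intervalIntegrable ε 1)
  have hGε : G ε = Real.log ε + 1/2 := by
    rw [hGdef]
    simp only [sub_self]
    rw [show (0:ℝ)^2 + ε^2 = ε^2 by ring]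
    rw [show Real.log (ε^2) = 2 * Real.log ε by
      rw [Real.log_pow]; norm_num]
    have : ε^2 ≠ 0 := by positivity
    field_simp
    rw [zero_div, Real.arctan_zero]
    ring
  have hG1 : G 1 ≤ 3/2 := by
    rw [hGdef]
    have hD1 : (0:ℝ) < (1-ε)^2+ε^2 := by positivity
    have t1 : Real.log ((1-ε)^2+ε^2)/2 ≤ 0 := by
      have : Real.log ((1-ε)^2+ε^2) ≤ 0 := Real.log_nonpos (by positivity) (by nlinarith)
      linarith
    have t2 : ε^2/(2*((1-ε)^2+ε^2)) ≤ 1/2 := by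
      rw [div_le_div_iff₀ (by positivity) (by norm_num)]
      nlinarith
    have t3 : Real.arctan ((1-ε)/ε)/2 ≤ 1 := by
      have := Real.arctan_lt_pi_div_two ((1-ε)/ε)
      have hpi := Real.pi_lt_d2
      linarith
    have t4 : 0 ≤ ε*(1-ε)/(2*((1-ε)^2+ε^2)) := by
      have h1e : (0:ℝ) ≤ 1 - ε := by linarith
      positivity
    linarith
  have hbound : (∫ t in ε..1, g t) ≤ L + 2 := by
    rw [hgint, hGε, hL]
    linarith
  have hI1 : (∫ t in ε..1, F t) = (1/L^2) * ∫ t in ε..1, g t := by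
    rw [integral_congr hEq1, intervalIntegral.integral_const_mul]
  have hfinal : (∫ t in (0:ℝ)..1, F t) ≤ (1/L^2) * (L + 2) := by
    rw [hsplit, hI0, hI1, zero_add]
    have : (0:ℝ) < 1/L^2 := by positivity
    nlinarith
  have hpi : 0 < Real.pi := Real.pi_pos
  have step1 : Real.pi * ∫ t in (0:ℝ)..1, F t ≤ Real.pi / L + 2 * Real.pi / L^2 := by
    have := mul_le_mul_of_nonneg_left hfinal hpi.le
    calc Real.pi * ∫ t in (0:ℝ)..1, F t ≤ Real.pi * ((1/L^2) * (L+2)) := this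
      _ = Real.pi / L + 2 * Real.pi / L^2 := by field_simp
  have step2 : 2 * Real.pi / L^2 ≤ 2 * Real.pi / L ^ ((3:ℝ)/2) := by
    have h32 : L ^ ((3:ℝ)/2) ≤ L^2 := by
      calc L ^ ((3:ℝ)/2) ≤ L ^ ((2:ℕ):ℝ) :=
            Real.rpow_le_rpow_of_exponent_le hL1.le (by norm_num)
        _ = L^2 := Real.rpow_natCast L 2
    have hr : (0:ℝ) < L ^ ((3:ℝ)/2) := Real.rpow_pos_of_pos hLpos _
    gcongr
  calc Real.pi * ∫ t in (0:ℝ)..1, F t ≤ Real.pi / L + 2 * Real.pi / L^2 := step1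
    _ ≤ Real.pi / L + 2 * Real.pi / L ^ ((3:ℝ)/2) := by linarith
end

section
/- Let ε ∈ (0,1/4) and η_ε the scaled logarithmic profile on ℝ with η_ε(t) = -(1/|ln ε|)·ln √((|t|-ε)² + ε²) for ε < |t| < ε + √(1-ε²), η_ε = 1 on [-ε,ε], η_ε = 0 elsewhere. Then ∫_ℝ η_ε(t)² dt ≤ C/|ln ε|² and ε·∫_ℝ |η_ε'(t)|² dt ≤ C/|ln ε|² for a universal constant C > 0. -/
open MeasureTheory Set Real

lemma absRpowInt {r : ℝ} (h : -1 < r) (a b : ℝ) :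
    IntervalIntegrable (fun u : ℝ => |u| ^ r) volume a b := by
  have H : ∀ c : ℝ, 0 ≤ c → IntervalIntegrable (fun u : ℝ => |u| ^ r) volume 0 c := by
    intro c hc
    have h0 : IntervalIntegrable (fun u : ℝ => u ^ r) volume 0 c :=
      intervalIntegral.intervalIntegrable_rpow' h
    rw [intervalIntegrable_iff] at h0 ⊢
    refine h0.congr_fun ?_ measurableSet_uIoc
    intro x hx
    rw [uIoc_of_le hc] at hx
    simp [abs_of_pos hx.1]
  have key : ∀ c : ℝ, IntervalIntegrable (fun u : ℝ => |u| ^ r) volume 0 c := by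
    intro c
    rcases le_total 0 c with hc | hc
    · exact H c hc
    · rw [IntervalIntegrable.iff_comp_neg]
      simp only [abs_neg, neg_zero]
      exact H (-c) (by linarith)
  exact (key a).symm.trans (key b)

lemma absRpowVal {r : ℝ} (h : -1 < r) (hr : r ≠ -1) (c : ℝ) (hc : 0 ≤ c) :
    ∫ u in (0:ℝ)..c, |u| ^ r = c ^ (r+1) / (r+1) := by
  have heq : ∫ u in (0:ℝ)..c, |u| ^ r = ∫ u in (0:ℝ)..c, u ^ r := by
    refine intervalIntegral.integral_congr ?_
    intro x hx
    rw [uIcc_of_le hc] at hx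
    rcases eq_or_lt_of_le hx.1 with h0 | h0
    · simp [← h0]
    · simp [abs_of_pos h0]
  rw [heq, integral_rpow (Or.inl h)]
  rw [Real.zero_rpow (fun hh => hr (by linarith)), sub_zero]

lemma epsLogSq {ε : ℝ} (h0 : 0 < ε) (hlt : ε < 1) : ε * |Real.log ε|^2 ≤ 4 := by
  have hs : 0 < Real.sqrt ε := Real.sqrt_pos.2 h0
  have h1 : Real.log ((Real.sqrt ε)⁻¹) ≤ (Real.sqrt ε)⁻¹ - 1 :=
    Real.log_le_sub_one_of_pos (by positivity)
  rw [Real.log_inv, Real.log_sqrt h0.le] at h1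
  have h2 : |Real.log ε| ≤ 2 / Real.sqrt ε := by
    rw [abs_le, div_eq_mul_inv]
    constructor
    · nlinarith
    · have := Real.log_le_sub_one_of_pos h0
      nlinarith [inv_pos.2 hs]
  have h3 : |Real.log ε|^2 ≤ (2 / Real.sqrt ε)^2 := by
    apply pow_le_pow_left₀ (abs_nonneg _) h2
  have h4 : (2 / Real.sqrt ε)^2 = 4 / ε := by
    rw [div_pow, Real.sq_sqrt h0.le]; norm_num
  rw [h4] at h3
  calc ε * |Real.log ε|^2 ≤ ε * (4/ε) := by nlinarith
    _ = 4 := by field_simp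

lemma logSqBound {ε s : ℝ} (hε : 0 < ε) (hs : 0 < s) (hle : s^2 + ε^2 ≤ 1) :
    (Real.log (Real.sqrt (s^2+ε^2)))^2 ≤ 16 * |s| ^ (-(1/2):ℝ) := by
  have hX : 0 < s^2 + ε^2 := by positivity
  rw [Real.log_sqrt hX.le]
  have hlo : 2 * Real.log s ≤ Real.log (s^2+ε^2) := by
    have : Real.log (s^2) ≤ Real.log (s^2+ε^2) :=
      Real.log_le_log (by positivity) (by nlinarith)
    rwa [Real.log_pow, Nat.cast_ofNat] at this
  have hhi : Real.log (s^2+ε^2) ≤ 0 := Real.log_nonpos hX.le hle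
  have hu : (0:ℝ) < s ^ ((1/4):ℝ) := Real.rpow_pos_of_pos hs _
  have h1 : Real.log ((s ^ ((1/4):ℝ))⁻¹) ≤ (s ^ ((1/4):ℝ))⁻¹ - 1 :=
    Real.log_le_sub_one_of_pos (by positivity)
  rw [Real.log_inv, Real.log_rpow hs] at h1
  have hinv : (s ^ ((1/4):ℝ))⁻¹ = s ^ (-(1/4):ℝ) := by
    rw [← Real.rpow_neg hs.le]
  rw [hinv] at h1
  have h4 : -Real.log s ≤ 4 * s ^ (-(1/4):ℝ) := by
    nlinarith [Real.rpow_pos_of_pos hs (-(1/4):ℝ)]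
  have hsq : (s ^ (-(1/4):ℝ))^2 = s ^ (-(1/2):ℝ) := by
    rw [sq, ← Real.rpow_add hs]; norm_num
  rw [abs_of_pos hs]
  have h5 : (Real.log (s^2+ε^2)/2)^2 ≤ (-Real.log s)^2 := by nlinarith
  calc (Real.log (s^2+ε^2)/2)^2 ≤ (-Real.log s)^2 := h5
    _ ≤ (4 * s ^ (-(1/4):ℝ))^2 := by
        apply pow_le_pow_left₀ (by nlinarith) h4
    _ = 16 * s ^ (-(1/2):ℝ) := by rw [mul_pow, hsq]; norm_num

lemma derivBound {L X v : ℝ} (hL : 0 < L) (hX : 0 < X) (hv : v^2 ≤ X) :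
    (-(1/(2*L)) * (2*v/X))^2 ≤ 1/L^2 * X⁻¹ := by
  have h1 : (-(1/(2*L)) * (2*v/X))^2 = v^2 / (L^2 * X^2) := by
    field_simp
  have h2 : 1/L^2 * X⁻¹ = X / (L^2 * X^2) := by
    field_simp
  rw [h1, h2]
  gcongr

set_option maxHeartbeats 2000000 in
/-- `L²` estimates for the scaled logarithmic cutoff profile `η_ε`:
`∫_ℝ η_ε² ≤ C/|ln ε|²` and `ε ∫_ℝ |η_ε'|² ≤ C/|ln ε|²` for a universal `C`. -/
theorem stmt7 : ∃ C : ℝ, 0 < C ∧ ∀ ε : ℝ, ε ∈ Set.Ioo 0 (1 / 4 : ℝ) →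
    let η : ℝ → ℝ := fun t =>
      if |t| ≤ ε then 1
      else if |t| < ε + Real.sqrt (1 - ε ^ 2) then
        -(1 / |Real.log ε|) * Real.log (Real.sqrt ((|t| - ε) ^ 2 + ε ^ 2))
      else 0
    (∫ t : ℝ, (η t) ^ 2) ≤ C / |Real.log ε| ^ 2 ∧
    ε * ∫ t : ℝ, (deriv η t) ^ 2 ≤ C / |Real.log ε| ^ 2 := by
  refine ⟨200, by norm_num, ?_⟩
  rintro ε ⟨hε0, hε4⟩ η
  have hε1 : ε < 1 := by linarith
  set L := |Real.log ε| with hLdef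
  have hlogneg : Real.log ε < 0 := Real.log_neg hε0 hε1
  have hLpos : 0 < L := abs_pos.2 hlogneg.ne
  have hL2 : (0:ℝ) < L^2 := by positivity
  set b := ε + Real.sqrt (1 - ε^2) with hbdef
  have h1ε : (0:ℝ) < 1 - ε^2 := by nlinarith
  have hsq1 : Real.sqrt (1-ε^2) ≤ 1 := Real.sqrt_le_one.2 (by nlinarith)
  have hb2 : b < 2 := by rw [hbdef]; linarith
  have hεb : ε < b := by
    have := Real.sqrt_pos.2 h1ε
    rw [hbdef]; linarith
  have hb0 : 0 < b := lt_trans hε0 hεb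
  have hη : ∀ t, η t = if |t| ≤ ε then 1 else if |t| < b then
      -(1/L) * Real.log (Real.sqrt ((|t| - ε)^2 + ε^2)) else 0 := fun t => rfl
  set G1 : ℝ → ℝ := Set.indicator (Set.Icc (-ε) ε) (fun _ => (1:ℝ)) with hG1def
  set g : ℝ → ℝ := fun t => |(|t| - ε)| ^ (-(1/2):ℝ) with hgdef
  set G2 : ℝ → ℝ := Set.indicator (Set.Ioo (-2:ℝ) 2) (fun t => 16 / L^2 * g t) with hG2def
  have hgnonneg : ∀ t, 0 ≤ g t := fun t => Real.rpow_nonneg (abs_nonneg _) _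
  have hG1nonneg : ∀ t, 0 ≤ G1 t := fun t =>
    Set.indicator_nonneg (fun _ _ => zero_le_one) t
  have hG2nonneg : ∀ t, 0 ≤ G2 t := fun t =>
    Set.indicator_nonneg (fun x _ => by positivity) t
  -- pointwise bound
  have hpoint : ∀ t, (η t)^2 ≤ G1 t + G2 t := by
    intro t
    rw [hη]
    by_cases h1 : |t| ≤ ε
    · rw [if_pos h1]
      have hmem : t ∈ Set.Icc (-ε) ε := by
        rw [Set.mem_Icc]; exact abs_le.1 h1
      have : G1 t = 1 := Set.indicator_of_mem hmem _
      rw [this, one_pow]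
      linarith [hG2nonneg t]
    · rw [if_neg h1]
      push_neg at h1
      by_cases h2 : |t| < b
      · rw [if_pos h2]
        have hs : 0 < |t| - ε := by linarith
        have hss := Real.sq_sqrt h1ε.le
        have hle : (|t|-ε)^2 + ε^2 ≤ 1 := by
          have h3 : |t| - ε < Real.sqrt (1-ε^2) := by
            rw [hbdef] at h2; linarith
          nlinarith [Real.sqrt_nonneg (1-ε^2)]
        have key := logSqBound hε0 hs hle
        have hmem : t ∈ Set.Ioo (-2:ℝ) 2 := by
          rw [Set.mem_Ioo, ← abs_lt]; linarith
        have heq : (-(1/L) * Real.log (Real.sqrt ((|t|-ε)^2+ε^2)))^2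
            = 1/L^2 * (Real.log (Real.sqrt ((|t|-ε)^2+ε^2)))^2 := by ring
        rw [heq]
        have hG2t : G2 t = 16/L^2 * g t := Set.indicator_of_mem hmem _
        have : 1/L^2 * (Real.log (Real.sqrt ((|t|-ε)^2+ε^2)))^2
            ≤ 1/L^2 * (16 * |(|t| - ε)| ^ (-(1/2):ℝ)) := by
          apply mul_le_mul_of_nonneg_left key (by positivity)
        rw [hG2t]
        have hrw : 1/L^2 * (16 * |(|t| - ε)| ^ (-(1/2):ℝ)) = 16/L^2 * g t := by
          rw [hgdef]; ring
        linarith [hG1nonneg t, hrw ▸ this]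
      · rw [if_neg h2]
        simpa using add_nonneg (hG1nonneg t) (hG2nonneg t)
  -- integrability
  have hG1int : Integrable G1 := by
    rw [hG1def, integrable_indicator_iff measurableSet_Icc]
    exact integrableOn_const measure_Icc_lt_top.ne
  have gI02 : IntervalIntegrable g volume 0 2 := by
    have base := (absRpowInt (by norm_num : (-1:ℝ) < -(1/2)) (-ε) (2-ε)).comp_sub_right ε
    norm_num at base
    rw [intervalIntegrable_iff] at base ⊢
    refine base.congr_fun ?_ measurableSet_uIoc
    intro x hx
    rw [uIoc_of_le (by norm_num : (0:ℝ) ≤ 2)] at hx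
    simp [hgdef, abs_of_pos hx.1]
  have gI20 : IntervalIntegrable g volume (-2) 0 := by
    rw [IntervalIntegrable.iff_comp_neg]
    have hfun : (fun x => g (-x)) = g := by
      funext x; simp [hgdef, abs_neg]
    rw [hfun]
    simpa using gI02.symm
  have gI := gI20.trans gI02
  have hG2int : Integrable G2 := by
    rw [hG2def, integrable_indicator_iff measurableSet_Ioo]
    have hgon : IntegrableOn g (Set.Ioo (-2:ℝ) 2) := by
      rw [← intervalIntegrable_iff_integrableOn_Ioo_of_le (by norm_num : (-2:ℝ) ≤ 2)]
      exact gI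
    exact hgon.const_mul _
  -- value of ∫ G1
  have hG1val : ∫ t, G1 t ≤ 8 / L^2 := by
    rw [hG1def, integral_indicator measurableSet_Icc, setIntegral_const, smul_eq_mul,
      mul_one, Real.volume_real_Icc_of_le (by linarith : -ε ≤ ε)]
    rw [le_div_iff₀ hL2]
    nlinarith [epsLogSq hε0 hε1]
  -- value of ∫ g on 0..2
  have hgval : ∫ t in (0:ℝ)..2, g t ≤ 6 := by
    have hcongr : ∫ t in (0:ℝ)..2, g t = ∫ t in (0:ℝ)..2, |t - ε| ^ (-(1/2):ℝ) := by
      refine intervalIntegral.integral_congr ?_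
      intro x hx
      rw [uIcc_of_le (by norm_num : (0:ℝ) ≤ 2)] at hx
      simp [hgdef, abs_of_nonneg hx.1]
    rw [hcongr]
    have hsub := intervalIntegral.integral_comp_sub_right
      (a := 0) (b := 2) (fun u => |u| ^ (-(1/2):ℝ)) ε
    rw [hsub]
    have hI1 := absRpowInt (by norm_num : (-1:ℝ) < -(1/2)) (0-ε) 0
    have hI2 := absRpowInt (by norm_num : (-1:ℝ) < -(1/2)) 0 (2-ε)
    rw [← intervalIntegral.integral_add_adjacent_intervals hI1 hI2]
    have e1 : ∫ u in (0-ε)..(0:ℝ), |u| ^ (-(1/2):ℝ) = ∫ u in (0:ℝ)..ε, |u| ^ (-(1/2):ℝ) := by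
      have := intervalIntegral.integral_comp_neg (a := 0) (b := ε) (fun u => |u| ^ (-(1/2):ℝ))
      simp only [abs_neg] at this
      rw [show (0:ℝ)-ε = -ε by ring, show (-0:ℝ) = 0 by ring] at *
      rw [← this]
    rw [e1, absRpowVal (by norm_num) (by norm_num) ε hε0.le,
      absRpowVal (by norm_num) (by norm_num) (2-ε) (by linarith)]
    norm_num
    have b1 : ε ^ ((2:ℝ)⁻¹) ≤ 1 := Real.rpow_le_one hε0.le hε1.le (by norm_num)
    have b2 : (2-ε) ^ ((2:ℝ)⁻¹) ≤ 2 := by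
      calc (2-ε) ^ ((2:ℝ)⁻¹) ≤ 2 ^ ((2:ℝ)⁻¹) :=
            Real.rpow_le_rpow (by linarith) (by linarith) (by norm_num)
        _ ≤ 2 ^ (1:ℝ) := Real.rpow_le_rpow_of_exponent_le (by norm_num) (by norm_num)
        _ = 2 := Real.rpow_one 2
    linarith
  have hG2val : ∫ t, G2 t ≤ 192 / L^2 := by
    rw [hG2def, integral_indicator measurableSet_Ioo, ← integral_Ioc_eq_integral_Ioo,
      ← intervalIntegral.integral_of_le (by norm_num : (-2:ℝ) ≤ 2),
      intervalIntegral.integral_const_mul]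
    have e2 : ∫ t in (-2:ℝ)..0, g t = ∫ t in (0:ℝ)..2, g t := by
      have := intervalIntegral.integral_comp_neg (a := 0) (b := 2) g
      have hfun : (fun x => g (-x)) = g := by
        funext x; simp [hgdef, abs_neg]
      rw [hfun] at this
      norm_num at this
      exact this.symm
    have h22 : ∫ t in (-2:ℝ)..2, g t ≤ 12 := by
      rw [← intervalIntegral.integral_add_adjacent_intervals gI20 gI02, e2]
      linarith
    calc 16/L^2 * ∫ t in (-2:ℝ)..2, g t ≤ 16/L^2 * 12 := by
          apply mul_le_mul_of_nonneg_left h22 (by positivity)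
      _ = 192/L^2 := by ring
  have part1 : (∫ t : ℝ, (η t)^2) ≤ 200 / L^2 := by
    have hmono := integral_mono_of_nonneg (ae_of_all _ fun t => sq_nonneg (η t))
      (hG1int.add hG2int) (ae_of_all _ hpoint)
    simp only [Pi.add_apply] at hmono
    have hadd : ∫ t, (G1 t + G2 t) = (∫ t, G1 t) + ∫ t, G2 t := integral_add hG1int hG2int
    rw [hadd] at hmono
    have : (8:ℝ)/L^2 + 192/L^2 = 200/L^2 := by ring
    linarith
  refine ⟨part1, ?_⟩
  -- derivative part
  set φ : ℝ → ℝ := fun t => ((|t| - ε)^2 + ε^2)⁻¹ with hφdef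
  set D : ℝ → ℝ := Set.indicator (Set.Ioo (-2:ℝ) 2) (fun t => 1/L^2 * φ t) with hDdef
  have hφpos : ∀ t : ℝ, (0:ℝ) < (|t| - ε)^2 + ε^2 := fun t => by positivity
  have hDnonneg : ∀ t, 0 ≤ D t := fun t =>
    Set.indicator_nonneg (fun x _ => by positivity) t
  -- derivative computations
  have hderiv_core : ∀ t : ℝ, |t| < ε → deriv η t = 0 := by
    intro t ht
    have hopen : IsOpen {x : ℝ | |x| < ε} := isOpen_lt continuous_abs continuous_const
    have hev : η =ᶠ[nhds t] (fun _ => (1:ℝ)) := by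
      filter_upwards [hopen.mem_nhds ht] with x hx
      rw [hη]; exact if_pos (le_of_lt hx)
    rw [hev.deriv_eq, deriv_const]
  have hderiv_out : ∀ t : ℝ, b < |t| → deriv η t = 0 := by
    intro t ht
    have hopen : IsOpen {x : ℝ | b < |x|} := isOpen_lt continuous_const continuous_abs
    have hev : η =ᶠ[nhds t] (fun _ => (0:ℝ)) := by
      filter_upwards [hopen.mem_nhds ht] with x hx
      have hx' : b < |x| := hx
      rw [hη, if_neg (by push_neg; linarith), if_neg (by push_neg; linarith)]
    rw [hev.deriv_eq, deriv_const]
  have hderiv_pos : ∀ t : ℝ, ε < t → t < b →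
      deriv η t = -(1/(2*L)) * (2*(t-ε)/((t-ε)^2+ε^2)) := by
    intro t h1 h2
    have hev : η =ᶠ[nhds t] (fun x => -(1/(2*L)) * Real.log ((x-ε)^2+ε^2)) := by
      filter_upwards [isOpen_Ioo.mem_nhds (⟨h1, h2⟩ : t ∈ Set.Ioo ε b)] with x hx
      have hx0 : 0 < x := lt_trans hε0 hx.1
      rw [hη, abs_of_pos hx0, if_neg (not_le.2 hx.1), if_pos hx.2,
        Real.log_sqrt (by positivity)]
      ring
    rw [hev.deriv_eq]
    have hd : HasDerivAt (fun x : ℝ => (x-ε)^2+ε^2) (2*(t-ε)) t := by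
      have h := (((hasDerivAt_id t).sub_const ε).pow 2).add_const (ε^2)
      refine h.congr_deriv ?_
      simp only [id_eq]
      push_cast
      ring
    have hlog := hd.log (ne_of_gt (by positivity))
    exact (hlog.const_mul (-(1/(2*L)))).deriv
  have hderiv_neg : ∀ t : ℝ, -b < t → t < -ε →
      deriv η t = -(1/(2*L)) * (2*(t+ε)/((t+ε)^2+ε^2)) := by
    intro t h1 h2
    have hev : η =ᶠ[nhds t] (fun x => -(1/(2*L)) * Real.log ((x+ε)^2+ε^2)) := by
      filter_upwards [isOpen_Ioo.mem_nhds (⟨h1, h2⟩ : t ∈ Set.Ioo (-b) (-ε))] with x hx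
      have hx0 : x < 0 := lt_trans hx.2 (by linarith)
      have hxε : ε < -x := by linarith [hx.2]
      rw [hη, abs_of_neg hx0, if_neg (not_le.2 hxε), if_pos (by linarith [hx.1]),
        Real.log_sqrt (by positivity)]
      have hsq : (-x - ε)^2 = (x+ε)^2 := by ring
      rw [hsq]; ring
    rw [hev.deriv_eq]
    have hd : HasDerivAt (fun x : ℝ => (x+ε)^2+ε^2) (2*(t+ε)) t := by
      have h := (((hasDerivAt_id t).add_const ε).pow 2).add_const (ε^2)
      refine h.congr_deriv ?_
      simp only [id_eq]
      push_cast
      ring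
    have hlog := hd.log (ne_of_gt (by positivity))
    exact (hlog.const_mul (-(1/(2*L)))).deriv
  -- a.e. pointwise bound
  have hbound : ∀ t : ℝ, t ∉ ({-b, -ε, ε, b} : Set ℝ) → (deriv η t)^2 ≤ D t := by
    intro t ht
    simp only [Set.mem_insert_iff, Set.mem_singleton_iff, not_or] at ht
    obtain ⟨hn1, hn2, hn3, hn4⟩ := ht
    rcases lt_trichotomy (|t|) ε with hc | hc | hc
    · rw [hderiv_core t hc]
      simpa using hDnonneg t
    · rcases abs_eq hε0.le |>.1 hc with h | h
      · exact absurd h hn3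
      · exact absurd h hn2
    · rcases lt_trichotomy (|t|) b with hd' | hd' | hd'
      · have hmem : t ∈ Set.Ioo (-2:ℝ) 2 := by
          rw [Set.mem_Ioo, ← abs_lt]; linarith
        have hDt : D t = 1/L^2 * ((|t| - ε)^2 + ε^2)⁻¹ := Set.indicator_of_mem hmem _
        rcases le_or_gt 0 t with hsign | hsign
        · have habs : |t| = t := abs_of_nonneg hsign
          rw [habs] at hc hd'
          rw [hderiv_pos t hc hd', hDt, habs]
          exact derivBound hLpos (by positivity) (by nlinarith [sq_nonneg ε])
        · have habs : |t| = -t := abs_of_neg hsign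
          rw [habs] at hc hd'
          rw [hderiv_neg t (by linarith) (by linarith), hDt, habs,
            show (-t - ε)^2 = (t+ε)^2 from by ring]
          exact derivBound hLpos (by positivity) (by nlinarith [sq_nonneg ε])
      · rcases abs_eq hb0.le |>.1 hd' with h | h
        · exact absurd h hn4
        · exact absurd h hn1
      · rw [hderiv_out t hd']
        simpa using hDnonneg t
  -- integrability of D
  have hφcont : Continuous φ := by
    apply Continuous.inv₀
    · continuity
    · intro t; exact (hφpos t).ne'
  have hDint : Integrable D := by
    rw [hDdef, integrable_indicator_iff measurableSet_Ioo]
    exact ((continuous_const.mul hφcont).integrableOn_Icc).mono_set Ioo_subset_Icc_self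
  -- arctan antiderivative
  have hAt : ∀ u : ℝ, HasDerivAt (fun v => Real.arctan (v/ε)) (ε * (u^2+ε^2)⁻¹) u := by
    intro u
    have h1 : HasDerivAt (fun v : ℝ => v/ε) (1/ε) u := (hasDerivAt_id u).div_const ε
    have h2 := (Real.hasDerivAt_arctan (u/ε)).comp u h1
    refine h2.congr_deriv ?_
    have : (0:ℝ) < u^2 + ε^2 := by positivity
    field_simp
    ring
  have harctint : ∫ u in (-ε)..(2-ε), ε * (u^2+ε^2)⁻¹
      = Real.arctan ((2-ε)/ε) - Real.arctan ((-ε)/ε) := by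
    apply intervalIntegral.integral_eq_sub_of_hasDerivAt (fun u _ => hAt u)
    apply Continuous.intervalIntegrable
    apply continuous_const.mul
    apply Continuous.inv₀
    · continuity
    · intro u; positivity
  have harctbd : ε * ∫ u in (-ε)..(2-ε), (u^2+ε^2)⁻¹ ≤ 4 := by
    rw [← intervalIntegral.integral_const_mul, harctint]
    have b1 := Real.arctan_lt_pi_div_two ((2-ε)/ε)
    have b2 := Real.neg_pi_div_two_lt_arctan ((-ε)/ε)
    have hpi := Real.pi_lt_d2
    linarith
  -- integral of D
  have hφI : ∀ a c : ℝ, IntervalIntegrable φ volume a c :=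
    fun a c => hφcont.intervalIntegrable a c
  have hφe : ∫ t in (-2:ℝ)..0, φ t = ∫ t in (0:ℝ)..2, φ t := by
    have := intervalIntegral.integral_comp_neg (a := 0) (b := 2) φ
    have hfun : (fun x => φ (-x)) = φ := by
      funext x; simp [hφdef, abs_neg]
    rw [hfun] at this
    norm_num at this
    exact this.symm
  have hφ02 : ∫ t in (0:ℝ)..2, φ t = ∫ u in (-ε)..(2-ε), (u^2+ε^2)⁻¹ := by
    have hcongr : ∫ t in (0:ℝ)..2, φ t = ∫ t in (0:ℝ)..2, ((t-ε)^2+ε^2)⁻¹ := by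
      refine intervalIntegral.integral_congr ?_
      intro x hx
      rw [uIcc_of_le (by norm_num : (0:ℝ) ≤ 2)] at hx
      simp [hφdef, abs_of_nonneg hx.1]
    rw [hcongr]
    have hsub := intervalIntegral.integral_comp_sub_right
      (a := 0) (b := 2) (fun u => (u^2+ε^2)⁻¹) ε
    rw [hsub]
    norm_num
  have hDval : ε * ∫ t, D t ≤ 8 / L^2 := by
    rw [hDdef, integral_indicator measurableSet_Ioo, ← integral_Ioc_eq_integral_Ioo,
      ← intervalIntegral.integral_of_le (by norm_num : (-2:ℝ) ≤ 2),
      intervalIntegral.integral_const_mul,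
      ← intervalIntegral.integral_add_adjacent_intervals (hφI (-2) 0) (hφI 0 2),
      hφe, hφ02]
    set I := ∫ u in (-ε)..(2-ε), (u^2+ε^2)⁻¹ with hIdef
    rw [show ε * (1/L^2 * (I + I)) = 2/L^2 * (ε * I) from by ring,
      show (8:ℝ)/L^2 = 2/L^2 * 4 from by ring]
    exact mul_le_mul_of_nonneg_left harctbd (by positivity)
  -- conclude
  have hnull : volume ({-b, -ε, ε, b} : Set ℝ) = 0 := (Set.toFinite _).measure_zero _
  have hae : ∀ᵐ t : ℝ, (deriv η t)^2 ≤ D t := by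
    rw [MeasureTheory.ae_iff]
    refine measure_mono_null ?_ hnull
    intro t ht
    by_contra hts
    exact ht (hbound t hts)
  have hmono2 := integral_mono_of_nonneg (ae_of_all _ fun t => sq_nonneg (deriv η t)) hDint hae
  calc ε * ∫ t : ℝ, (deriv η t)^2 ≤ ε * ∫ t, D t :=
        mul_le_mul_of_nonneg_left hmono2 hε0.le
    _ ≤ 8/L^2 := hDval
    _ ≤ 200/L^2 := by gcongr <;> norm_num
end

section
/- Let β ∈ (0,1], ε ∈ (0,β), and define ũ_ε(t) = sin((π/2)·arcsin(tanh(t/ε))/arcsin(tanh(β/ε))) for |t| ≤ β and ũ_ε(t) = sign(t) for |t| ≥ β, with ṽ_ε = √(1 - ũ_ε²). Then there exist universal constants C, c₀ > 0 such that for all t ∈ ℝ: |sign(t) - ũ_ε(t)| + |ṽ_ε(t)| ≤ C·e^{-c₀|t|/ε}. -/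
open Real

private lemma tanh_exp (x : ℝ) :
    Real.tanh x = (Real.exp (2*x) - 1) / (Real.exp (2*x) + 1) := by
  have h1 : Real.exp x ≠ 0 := (Real.exp_pos x).ne'
  have h2 : (0:ℝ) < Real.exp (2*x) + 1 := by positivity
  rw [Real.tanh_eq_sinh_div_cosh, Real.sinh_eq, Real.cosh_eq]
  have hx2 : Real.exp (2*x) = Real.exp x * Real.exp x := by
    rw [← Real.exp_add]; ring_nf
  rw [Real.exp_neg, two_mul, Real.exp_add]
  field_simp

private lemma tanh_lt_one' (x : ℝ) : Real.tanh x < 1 := by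
  rw [tanh_exp]
  have h2 : (0:ℝ) < Real.exp (2*x) + 1 := by positivity
  rw [div_lt_one h2]; linarith

private lemma tanh_nonneg' {x : ℝ} (hx : 0 ≤ x) : 0 ≤ Real.tanh x := by
  rw [tanh_exp]
  have h1 : (1:ℝ) ≤ Real.exp (2*x) := Real.one_le_exp (by linarith)
  have h2 : (0:ℝ) < Real.exp (2*x) + 1 := by positivity
  exact div_nonneg (by linarith) h2.le

private lemma tanh_mono' {x y : ℝ} (h : x ≤ y) : Real.tanh x ≤ Real.tanh y := by
  rw [tanh_exp, tanh_exp]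
  have h1 : (0:ℝ) < Real.exp (2*x) + 1 := by positivity
  have h2 : (0:ℝ) < Real.exp (2*y) + 1 := by positivity
  rw [div_le_div_iff₀ h1 h2]
  have := Real.exp_le_exp.2 (by linarith : 2*x ≤ 2*y)
  nlinarith

private lemma tanh_ge_half {x : ℝ} (hx : 1 ≤ x) : (1:ℝ)/2 ≤ Real.tanh x := by
  rw [tanh_exp]
  have h2 : (0:ℝ) < Real.exp (2*x) + 1 := by positivity
  rw [le_div_iff₀ h2]
  have : (3:ℝ) ≤ Real.exp (2*x) := by
    have := Real.add_one_le_exp (2*x)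
    linarith
  linarith

private lemma sqrt_one_sub_tanh_sq {x : ℝ} (hx : 0 ≤ x) :
    Real.sqrt (1 - Real.tanh x ^ 2) ≤ 2 * Real.exp (-x) := by
  have key : 1 - Real.tanh x ^ 2 ≤ (2 * Real.exp (-x))^2 := by
    rw [tanh_exp]
    have hA : (0:ℝ) < Real.exp (2*x) := Real.exp_pos _
    have h2 : (0:ℝ) < Real.exp (2*x) + 1 := by positivity
    have hm : Real.exp (-x) * Real.exp (-x) = (Real.exp (2*x))⁻¹ := by
      rw [← Real.exp_add, ← Real.exp_neg]; ring_nf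
    have : 1 - ((Real.exp (2*x) - 1) / (Real.exp (2*x) + 1))^2
        = 4 * Real.exp (2*x) / (Real.exp (2*x) + 1)^2 := by
      field_simp; ring
    rw [this]
    have h4 : 4 * Real.exp (2*x) / (Real.exp (2*x) + 1)^2 ≤ 4 / Real.exp (2*x) := by
      rw [div_le_div_iff₀ (by positivity) hA]
      nlinarith
    calc 4 * Real.exp (2*x) / (Real.exp (2*x) + 1)^2 ≤ 4 / Real.exp (2*x) := h4
      _ = (2 * Real.exp (-x))^2 := by
          rw [mul_pow, pow_two (Real.exp (-x)), hm]; ring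
  calc Real.sqrt (1 - Real.tanh x ^ 2) ≤ Real.sqrt ((2 * Real.exp (-x))^2) :=
        Real.sqrt_le_sqrt key
    _ = 2 * Real.exp (-x) := Real.sqrt_sq (by positivity)

/-- Gudermannian decay: π/2 - arcsin (tanh x) ≤ π e^{-x} for x ≥ 0. -/
private lemma gd_decay {x : ℝ} (hx : 0 ≤ x) :
    π/2 - Real.arcsin (Real.tanh x) ≤ π * Real.exp (-x) := by
  set φ := π/2 - Real.arcsin (Real.tanh x) with hφ
  have hφ0 : 0 ≤ φ := by
    have := Real.arcsin_le_pi_div_two (Real.tanh x); rw [hφ]; linarith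
  have hφ2 : φ ≤ π/2 := by
    have : 0 ≤ Real.arcsin (Real.tanh x) := Real.arcsin_nonneg.2 (tanh_nonneg' hx)
    rw [hφ]; linarith
  have hsin : Real.sin φ = Real.sqrt (1 - Real.tanh x ^ 2) := by
    rw [hφ, Real.sin_pi_div_two_sub, Real.cos_arcsin]
  have h1 : 2 / π * φ ≤ Real.sin φ := Real.mul_le_sin hφ0 hφ2
  have h2 : Real.sin φ ≤ 2 * Real.exp (-x) := by
    rw [hsin]; exact sqrt_one_sub_tanh_sq hx
  have hπ : (0:ℝ) < π := Real.pi_pos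
  have := h1.trans h2
  calc φ = (π/2) * (2/π * φ) := by field_simp
    _ ≤ (π/2) * (2 * Real.exp (-x)) := by
        apply mul_le_mul_of_nonneg_left this (by positivity)
    _ = π * Real.exp (-x) := by ring


set_option maxHeartbeats 1000000 in
/-- Exponential decay of the one-dimensional transition profile: there are
universal `C, c₀ > 0` such that for `β ∈ (0,1]`, `ε ∈ (0,β)`, the profile
`ũ_ε` (and `ṽ_ε = √(1-ũ_ε²)`) satisfies
`|sign(t) - ũ_ε(t)| + |ṽ_ε(t)| ≤ C·e^{-c₀|t|/ε}` for all `t`. -/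
theorem stmt16 : ∃ C c₀ : ℝ, 0 < C ∧ 0 < c₀ ∧
    ∀ β ε : ℝ, β ∈ Set.Ioc (0 : ℝ) 1 → ε ∈ Set.Ioo 0 β →
    let u : ℝ → ℝ := fun t =>
      if |t| ≤ β then
        Real.sin ((Real.pi / 2) * Real.arcsin (Real.tanh (t / ε)) /
          Real.arcsin (Real.tanh (β / ε)))
      else Real.sign t
    let v : ℝ → ℝ := fun t => Real.sqrt (1 - (u t) ^ 2)
    ∀ t : ℝ, |Real.sign t - u t| + |v t| ≤ C * Real.exp (-c₀ * |t| / ε) := by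
  refine ⟨40, 1, by norm_num, one_pos, ?_⟩
  rintro β ε ⟨hβ0, hβ1⟩ ⟨hε0, hεβ⟩
  intro u v
  have hu : ∀ s : ℝ, u s = if |s| ≤ β then
      Real.sin ((π / 2) * Real.arcsin (Real.tanh (s / ε)) /
        Real.arcsin (Real.tanh (β / ε))) else Real.sign s := fun s => rfl
  have hv : ∀ s : ℝ, v s = Real.sqrt (1 - (u s) ^ 2) := fun s => rfl
  clear_value v
  clear_value u
  set a := Real.arcsin (Real.tanh (β / ε)) with ha_def
  have hβε : (1:ℝ) ≤ β / ε := (one_le_div hε0).2 hεβ.le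
  have htβ : (1:ℝ)/2 ≤ Real.tanh (β/ε) := tanh_ge_half hβε
  have ha_half : (1:ℝ)/2 ≤ a := by
    refine htβ.trans ?_
    have h1 : Real.tanh (β/ε) ≤ 1 := (tanh_lt_one' _).le
    have h0 : 0 ≤ Real.tanh (β/ε) := tanh_nonneg' (by positivity)
    have harc0 : 0 ≤ Real.arcsin (Real.tanh (β/ε)) := Real.arcsin_nonneg.2 h0
    have hsl := Real.sin_le harc0
    rw [Real.sin_arcsin (by linarith) h1] at hsl
    rw [ha_def]; exact hsl
  have ha0 : (0:ℝ) < a := by linarith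
  have ha2 : a ≤ π/2 := by rw [ha_def]; exact Real.arcsin_le_pi_div_two _
  clear_value a
  have key : ∀ s : ℝ, 0 ≤ s →
      |Real.sign s - u s| + |v s| ≤ 40 * Real.exp (-1 * |s| / ε) := by
    intro s hs
    have habs : |s| = s := abs_of_nonneg hs
    rcases hs.eq_or_lt with rfl | hs'
    · -- s = 0
      have hu0 : u 0 = 0 := by
        rw [hu, if_pos (by simpa using hβ0.le)]
        simp
      have hv0 : v 0 = 1 := by rw [hv, hu0]; simp
      rw [hu0, hv0, Real.sign_zero]
      simp only [sub_zero, abs_zero, abs_one, zero_add, mul_zero, zero_div,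
        Real.exp_zero]
      norm_num
    · -- s > 0
      have hsign : Real.sign s = 1 := Real.sign_of_pos hs'
      by_cases hsb : |s| ≤ β
      · have hsβ : s ≤ β := habs ▸ hsb
        set g := Real.arcsin (Real.tanh (s / ε)) with hg_def
        have hse : 0 ≤ s / ε := by positivity
        have hg0 : 0 ≤ g := by
          rw [hg_def]; exact Real.arcsin_nonneg.2 (tanh_nonneg' hse)
        have hga : g ≤ a := by
          rw [hg_def, ha_def]
          exact Real.monotone_arcsin (tanh_mono' (by gcongr))
        have hgd : π/2 - g ≤ π * Real.exp (-(s/ε)) := by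
          rw [hg_def]; exact gd_decay hse
        clear_value g
        set θ := π/2 * g / a with hθ_def
        have hθ0 : 0 ≤ θ := by
          rw [hθ_def]
          exact div_nonneg (mul_nonneg (by positivity) hg0) ha0.le
        have hθ2 : θ ≤ π/2 := by
          rw [hθ_def, div_le_iff₀ ha0]
          nlinarith [Real.pi_pos]
        have hus : u s = Real.sin θ := by
          rw [hθ_def, hg_def, hu, if_pos hsb]
        clear_value θ
        set D := π/2 - θ with hD_def
        have hD0 : 0 ≤ D := by rw [hD_def]; linarith
        have hD2 : D ≤ π/2 := by rw [hD_def]; linarith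
        have hDa : D * a = (π/2) * (a - g) := by
          rw [hD_def, hθ_def]; field_simp
        clear_value D
        have hag : a - g ≤ π * Real.exp (-(s/ε)) := by linarith
        have hDe : D ≤ π^2 * Real.exp (-(s/ε)) := by
          nlinarith [Real.pi_pos, Real.exp_pos (-(s/ε)),
            mul_le_mul_of_nonneg_left hag (le_of_lt Real.pi_pos)]
        have hsinθ : Real.sin θ = Real.cos D := by
          rw [show θ = π/2 - D by rw [hD_def]; ring, Real.sin_pi_div_two_sub]
        have hcosθ : Real.cos θ = Real.sin D := by
          rw [show θ = π/2 - D by rw [hD_def]; ring, Real.cos_pi_div_two_sub]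
        have hcosθ0 : 0 ≤ Real.cos θ :=
          Real.cos_nonneg_of_mem_Icc ⟨by linarith [Real.pi_pos], hθ2⟩
        have hvs : v s = Real.cos θ := by
          rw [hv, hus, ← Real.cos_sq']
          exact Real.sqrt_sq hcosθ0
        have h1 : |Real.sign s - u s| = 1 - Real.sin θ := by
          rw [hsign, hus, abs_of_nonneg (by linarith [Real.sin_le_one θ])]
        have h2 : |v s| = Real.sin D := by
          rw [hvs, abs_of_nonneg hcosθ0, hcosθ]
        rw [h1, h2, hsinθ, habs,
          show (-1 : ℝ) * s / ε = -(s/ε) by ring]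
        have hcosD : 1 - D^2/2 ≤ Real.cos D := Real.one_sub_sq_div_two_le_cos
        have hsinD : Real.sin D ≤ D := Real.sin_le hD0
        have hπ4 : π ≤ 4 := Real.pi_le_four
        have hπsq : π^2 ≤ 16 := by nlinarith [Real.pi_pos]
        have hD2' : D ≤ 2 := by linarith
        have hDsq : D^2 ≤ 2*D := by
          rw [pow_two]; exact mul_le_mul_of_nonneg_right hD2' hD0
        have h2D : 1 - Real.cos D + Real.sin D ≤ 2 * D := by linarith
        have hπe := mul_le_mul_of_nonneg_right hπsq (Real.exp_pos (-(s/ε))).le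
        linarith [Real.exp_pos (-(s/ε))]
      · -- |s| > β
        push_neg at hsb
        have hus : u s = Real.sign s := by rw [hu, if_neg (not_le.2 hsb)]
        have hvs : v s = 0 := by
          rw [hv, hus, hsign]; norm_num
        rw [hus, hvs, sub_self, abs_zero]
        have : (0:ℝ) < 40 * Real.exp (-1 * |s| / ε) := by positivity
        linarith
  intro t
  rcases le_or_gt 0 t with ht | ht
  · exact key t ht
  · have h := key (-t) (by linarith)
    have habs : |(-t)| = |t| := abs_neg t
    have hut : u (-t) = - u t := by
      rw [hu, hu, habs]
      by_cases htb : |t| ≤ β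
      · rw [if_pos htb, if_pos htb,
          show -t / ε = -(t/ε) by ring, Real.tanh_neg, Real.arcsin_neg,
          show π/2 * -Real.arcsin (Real.tanh (t/ε)) / a
            = -(π/2 * Real.arcsin (Real.tanh (t/ε)) / a) by ring]
        exact Real.sin_neg _
      · rw [if_neg htb, if_neg htb, Real.sign_neg]
    have hvt : v (-t) = v t := by
      rw [hv, hv, hut, neg_sq]
    have hst : Real.sign (-t) = - Real.sign t := Real.sign_neg
    rw [hst, hut, hvt, habs,
      show -Real.sign t - -u t = -(Real.sign t - u t) by ring, abs_neg] at h
    exact h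
end
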